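/- Let Δ be an affine root system with invariant positive semi-definite symmetric bilinear form (·,·). Let η₁, …, η_t be pairwise orthogonal real roots and η_{t+1} a real root with (η_i, η_{t+1}) < 0 for all i ≤ t. Then the (t+1)×(t+1) matrix A with entries A_{ij} = ⟨η_j, η_i^∨⟩ = 2(η_j,η_i)/(η_i,η_i) is a generalized Cartan matrix of finite or affine type. -/

import Mathlib

/-- Let `B` be a positive semi-definite symmetric bilinear form (the invariant form of an
affine root system).  Let `η₁, …, η_t` be pairwise orthogonal real roots (non-isotropic,
with integral Cartan pairings) and `η_{t+1}` a real root with `(η_i, η_{t+1}) < 0` for all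
`i ≤ t`.  Then the matrix `A` with `A i j = ⟨η_j, η_i^∨⟩ = 2(η_j,η_i)/(η_i,η_i)` is a
generalized Cartan matrix of finite or affine type: it is symmetrizable (by the diagonal of
squared lengths), its symmetrization is positive semi-definite, and of corank at most 1. -/
theorem stmt3 {U : Type*} [AddCommGroup U] [Module ℝ U]
    (B : U →ₗ[ℝ] U →ₗ[ℝ] ℝ)
    (hsymm : ∀ v w : U, B v w = B w v)
    (hpsd : ∀ v : U, 0 ≤ B v v)
    (t : ℕ) (η : Fin (t + 1) → U)
    (hreal : ∀ i, 0 < B (η i) (η i))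
    (hcrys : ∀ i j, ∃ n : ℤ, 2 * B (η i) (η j) / B (η i) (η i) = (n : ℝ))
    (horth : ∀ i j : Fin (t + 1), i ≠ j → i ≠ Fin.last t → j ≠ Fin.last t →
      B (η i) (η j) = 0)
    (hneg : ∀ i : Fin (t + 1), i ≠ Fin.last t → B (η i) (η (Fin.last t)) < 0) :
    (∀ i, (2 * B (η i) (η i) / B (η i) (η i) : ℝ) = 2) ∧
    (∀ i j, i ≠ j → 2 * B (η i) (η j) / B (η i) (η i) ≤ 0) ∧
    (∀ i j, (2 * B (η i) (η j) / B (η i) (η i) = 0 ↔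
             2 * B (η j) (η i) / B (η j) (η j) = 0)) ∧
    (∀ i j, B (η i) (η i) * (2 * B (η i) (η j) / B (η i) (η i)) = 2 * B (η i) (η j)) ∧
    (Matrix.of fun i j => B (η i) (η j)).PosSemidef ∧
    t ≤ (Matrix.of fun i j : Fin (t + 1) => B (η i) (η j)).rank := by
  have hne : ∀ i, B (η i) (η i) ≠ 0 := fun i => (hreal i).ne'
  refine ⟨fun i => by rw [mul_div_assoc, div_self (hne i), mul_one], ?_, ?_, ?_, ?_, ?_⟩
  · intro i j hij
    have hBij : B (η i) (η j) ≤ 0 := by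
      by_cases hi : i = Fin.last t
      · subst hi
        rw [hsymm]
        exact (hneg j (fun h => hij (h ▸ rfl))).le
      · by_cases hj : j = Fin.last t
        · subst hj; exact (hneg i hi).le
        · exact (horth i j hij hi hj).le
    exact div_nonpos_of_nonpos_of_nonneg (by linarith) (hreal i).le
  · intro i j
    constructor <;> intro h
    · have : B (η i) (η j) = 0 := by
        rcases div_eq_zero_iff.mp h with h | h
        · linarith
        · exact absurd h (hne i)
      rw [hsymm] at this
      simp [this]
    · have : B (η j) (η i) = 0 := by
        rcases div_eq_zero_iff.mp h with h | h
        · linarith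
        · exact absurd h (hne j)
      rw [hsymm] at this
      simp [this]
  · intro i j
    field_simp
    rw [mul_comm, mul_div_assoc, div_self (hne i), mul_one]
  · refine Matrix.posSemidef_iff_dotProduct_mulVec.2 ⟨?_, ?_⟩
    · ext i j
      simp [Matrix.conjTranspose, hsymm (η i) (η j)]
    · intro x
      have key : dotProduct (star x)
          (Matrix.mulVec (Matrix.of fun i j => B (η i) (η j)) x)
          = B (∑ i, x i • η i) (∑ i, x i • η i) := by
        simp only [dotProduct, Matrix.mulVec, Matrix.of_apply, map_sum, map_smul,
          LinearMap.sum_apply, LinearMap.smul_apply, smul_eq_mul, star_trivial, Pi.star_apply,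
          Finset.mul_sum]
        rw [Finset.sum_comm]
        exact Finset.sum_congr rfl fun _ _ => Finset.sum_congr rfl fun _ _ => by ring
      rw [key]
      exact hpsd _
  · -- rank bound via the diagonal t×t submatrix
    set G : Matrix (Fin (t + 1)) (Fin (t + 1)) ℝ := Matrix.of fun i j => B (η i) (η j) with hG
    have hDdiag : G.submatrix Fin.castSucc Fin.castSucc
        = Matrix.diagonal (fun i : Fin t => B (η i.castSucc) (η i.castSucc)) := by
      ext i j
      by_cases hij : i = j
      · subst hij; simp [hG]
      · have : B (η i.castSucc) (η j.castSucc) = 0 :=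
          horth _ _ (fun h => hij (Fin.castSucc_injective t h))
            (Fin.castSucc_lt_last i).ne (Fin.castSucc_lt_last j).ne
        simp [hG, Matrix.diagonal, hij, this]
    have hDrank : (G.submatrix Fin.castSucc Fin.castSucc).rank = t := by
      rw [hDdiag, Matrix.rank_of_isUnit]
      · simp
      · rw [Matrix.isUnit_iff_isUnit_det, Matrix.det_diagonal, isUnit_iff_ne_zero]
        exact Finset.prod_ne_zero_iff.2 fun i _ => hne _
    have hmul : G.submatrix Fin.castSucc Fin.castSucc
        = ((1 : Matrix (Fin (t + 1)) (Fin (t + 1)) ℝ).submatrix Fin.castSucc (Equiv.refl _)) * G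
          * ((1 : Matrix (Fin (t + 1)) (Fin (t + 1)) ℝ).submatrix (Equiv.refl _) Fin.castSucc) := by
      rw [Matrix.one_submatrix_mul, Matrix.mul_submatrix_one]
      ext i j
      simp
    calc t = (G.submatrix Fin.castSucc Fin.castSucc).rank := hDrank.symm
      _ ≤ (((1 : Matrix (Fin (t + 1)) (Fin (t + 1)) ℝ).submatrix Fin.castSucc (Equiv.refl _)) * G).rank := by
          rw [hmul]; exact Matrix.rank_mul_le_left _ _
      _ ≤ G.rank := Matrix.rank_mul_le_right _ _
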